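/- (TUR for an environmental observable, Eq. (3).) Let G_E ∈ M_M(ℂ) be Hermitian with G_E f_0 = g_0 f_0 for some real eigenvalue g_0, and let G = I_n ⊗ I_n ⊗ G_E. Then (⟨G⟩ − g_0)² ≤ Ξ · Var[G], where ⟨G⟩ and Var[G] are the expectation and variance of G in the final pure state Ψ_T, and Ξ = Tr[ρ (V_0† V_0)^{−1}] − 1 is the survival activity. -/

import Mathlib

open Matrix Kronecker Finset

noncomputable section

/-- Tensor product of two vectors. -/
def tvec {α β : Type*} (x : α → ℂ) (y : β → ℂ) : α × β → ℂ :=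
  fun q => x q.1 * y q.2

/-- Standard basis vector `f_m` of the environment `ℂ^(M+1)`. -/
def stdv (M : ℕ) (m : Fin (M + 1)) : Fin (M + 1) → ℂ :=
  fun k => if k = m then 1 else 0

variable {n M : ℕ}

/-- The final pure state `Ψ_T = ∑_{i,m} √p_i ψ_i ⊗ (V_m ψ_i) ⊗ f_m` of R+S+E. -/
def PsiT (ψ : Fin n → Fin n → ℂ) (p : Fin n → ℝ)
    (V : Fin (M + 1) → Matrix (Fin n) (Fin n) ℂ) :
    (Fin n × Fin n) × Fin (M + 1) → ℂ :=
  ∑ i, ∑ m, ((Real.sqrt (p i) : ℂ) • tvec (tvec (ψ i) (V m *ᵥ ψ i)) (stdv M m))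

/-- The unnormalized vector `Ψ̃_0 = ∑_i √p_i ψ_i ⊗ ((V_0†)⁻¹ ψ_i) ⊗ f_0`. -/
def PsiTilde0 (ψ : Fin n → Fin n → ℂ) (p : Fin n → ℝ)
    (V : Fin (M + 1) → Matrix (Fin n) (Fin n) ℂ) :
    (Fin n × Fin n) × Fin (M + 1) → ℂ :=
  ∑ i, ((Real.sqrt (p i) : ℂ) • tvec (tvec (ψ i) ((((V 0)ᴴ)⁻¹) *ᵥ ψ i)) (stdv M 0))

/-- The initial density matrix `ρ = ∑_i p_i ψ_i ψ_i†` of the principal system S. -/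
def rho (ψ : Fin n → Fin n → ℂ) (p : Fin n → ℝ) : Matrix (Fin n) (Fin n) ℂ :=
  ∑ i, ((p i : ℂ) • vecMulVec (ψ i) (star (ψ i)))

/-- Expectation value `⟨G⟩ = ⟨Ψ, G Ψ⟩` (its real part, which is all of it for Hermitian `G`). -/
def expval {ι : Type*} [Fintype ι] (G : Matrix ι ι ℂ) (Ψ : ι → ℂ) : ℝ :=
  (star Ψ ⬝ᵥ (G *ᵥ Ψ)).re

/-- Variance `Var[G] = ⟨Ψ, G² Ψ⟩ − ⟨G⟩²`. -/
def variance {ι : Type*} [Fintype ι] (G : Matrix ι ι ℂ) (Ψ : ι → ℂ) : ℝ :=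
  expval (G * G) Ψ - (expval G Ψ) ^ 2

/-- The survival activity `Ξ = Tr[ρ (V_0† V_0)⁻¹] − 1`. -/
def survivalActivity (ψ : Fin n → Fin n → ℂ) (p : Fin n → ℝ)
    (V : Fin (M + 1) → Matrix (Fin n) (Fin n) ℂ) : ℝ :=
  ((rho ψ p * ((V 0)ᴴ * V 0)⁻¹).trace).re - 1

section aux

set_option linter.unusedSectionVars false

variable {α β γ : Type*} [Fintype α] [Fintype β]

lemma sum_dot {s : Finset γ} (f : γ → α → ℂ) (v : α → ℂ) :
    (∑ i ∈ s, f i) ⬝ᵥ v = ∑ i ∈ s, f i ⬝ᵥ v := by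
  simp only [dotProduct, Finset.sum_apply, Finset.sum_mul]
  exact Finset.sum_comm

lemma dot_sum {s : Finset γ} (v : α → ℂ) (f : γ → α → ℂ) :
    v ⬝ᵥ (∑ i ∈ s, f i) = ∑ i ∈ s, v ⬝ᵥ f i := by
  simp only [dotProduct, Finset.sum_apply, Finset.mul_sum]
  exact Finset.sum_comm

lemma sum_mulVec' {s : Finset γ} (A : γ → Matrix α α ℂ) (x : α → ℂ) :
    (∑ i ∈ s, A i) *ᵥ x = ∑ i ∈ s, (A i *ᵥ x) := by
  funext a
  simp only [mulVec, dotProduct, Matrix.sum_apply, Finset.sum_mul, Finset.sum_apply]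
  exact Finset.sum_comm

lemma mulVec_sum' {s : Finset γ} (A : Matrix α α ℂ) (f : γ → α → ℂ) :
    A *ᵥ (∑ i ∈ s, f i) = ∑ i ∈ s, (A *ᵥ f i) := by
  funext a
  simp only [mulVec, Finset.sum_apply]
  exact dot_sum _ _

lemma star_tvec (x : α → ℂ) (y : β → ℂ) : star (tvec x y) = tvec (star x) (star y) := by
  funext q; simp [tvec]

lemma tvec_dot (x x' : α → ℂ) (y y' : β → ℂ) :
    star (tvec x y) ⬝ᵥ tvec x' y' = (star x ⬝ᵥ x') * (star y ⬝ᵥ y') := by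
  simp only [star_tvec, dotProduct, tvec, Fintype.sum_prod_type, Finset.sum_mul_sum]
  exact Finset.sum_congr rfl fun a _ => Finset.sum_congr rfl fun b _ => by ring

lemma kron_mulVec (A : Matrix α α ℂ) (B : Matrix β β ℂ) (x : α → ℂ) (y : β → ℂ) :
    (A ⊗ₖ B) *ᵥ tvec x y = tvec (A *ᵥ x) (B *ᵥ y) := by
  funext q
  simp only [mulVec, dotProduct, kroneckerMap_apply, tvec, Fintype.sum_prod_type,
    Finset.sum_mul_sum]
  exact Finset.sum_congr rfl fun a _ => Finset.sum_congr rfl fun b _ => by ring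

lemma star_stdv (m : Fin (M + 1)) : star (stdv M m) = stdv M m := by
  funext k; simp [stdv, apply_ite]

lemma stdv_dot (m l : Fin (M + 1)) :
    star (stdv M m) ⬝ᵥ stdv M l = if m = l then 1 else 0 := by
  simp only [star_stdv, dotProduct, stdv, ite_mul, one_mul, zero_mul]
  by_cases h : m = l <;> simp [h, Finset.sum_ite_eq]

lemma dot_mulVec_move (A : Matrix α α ℂ) (x y : α → ℂ) :
    star (A *ᵥ x) ⬝ᵥ y = star x ⬝ᵥ (Aᴴ *ᵥ y) := by
  rw [star_mulVec, ← dotProduct_mulVec]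

lemma conj_dot (u v : α → ℂ) :
    (starRingEnd ℂ) (star u ⬝ᵥ v) = star v ⬝ᵥ u := by
  rw [star_dotProduct]; simp

lemma trace_vecMulVec_mul (x y : α → ℂ) (B : Matrix α α ℂ) :
    (vecMulVec x y * B).trace = y ⬝ᵥ (B *ᵥ x) := by
  simp only [trace, diag_apply, mul_apply, vecMulVec_apply, dotProduct, mulVec,
    Finset.mul_sum]
  rw [Finset.sum_comm]
  exact Finset.sum_congr rfl fun b _ => Finset.sum_congr rfl fun a _ => by ring

end aux

/-- **TUR for an environmental observable (Eq. (3)).** -/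
theorem env_TUR
    (ψ : Fin n → Fin n → ℂ)
    (hortho : ∀ i j, star (ψ i) ⬝ᵥ ψ j = if i = j then (1 : ℂ) else 0)
    (p : Fin n → ℝ) (hp : ∀ i, 0 ≤ p i) (hp1 : ∑ i, p i = 1)
    (V : Fin (M + 1) → Matrix (Fin n) (Fin n) ℂ)
    (hKraus : ∑ m, (V m)ᴴ * V m = 1)
    (hV0 : IsUnit (V 0))
    (GE : Matrix (Fin (M + 1)) (Fin (M + 1)) ℂ) (hGE : GE.IsHermitian)
    (g0 : ℝ) (hg0 : GE *ᵥ stdv M 0 = (g0 : ℂ) • stdv M 0) :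
    (expval (((1 : Matrix (Fin n) (Fin n) ℂ) ⊗ₖ (1 : Matrix (Fin n) (Fin n) ℂ)) ⊗ₖ GE)
        (PsiT ψ p V) - g0) ^ 2
      ≤ survivalActivity ψ p V *
        variance (((1 : Matrix (Fin n) (Fin n) ℂ) ⊗ₖ (1 : Matrix (Fin n) (Fin n) ℂ)) ⊗ₖ GE)
          (PsiT ψ p V) := by
  classical
  set G : Matrix ((Fin n × Fin n) × Fin (M + 1)) ((Fin n × Fin n) × Fin (M + 1)) ℂ :=
    ((1 : Matrix (Fin n) (Fin n) ℂ) ⊗ₖ (1 : Matrix (Fin n) (Fin n) ℂ)) ⊗ₖ GE with hGdef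
  set Ψ : (Fin n × Fin n) × Fin (M + 1) → ℂ := PsiT ψ p V with hΨdef
  set Φ : (Fin n × Fin n) × Fin (M + 1) → ℂ := PsiTilde0 ψ p V with hΦdef
  have hdet : IsUnit (V 0).det := (Matrix.isUnit_iff_isUnit_det _).mp hV0
  have hUnit : (V 0)⁻¹ * V 0 = 1 := nonsing_inv_mul _ hdet
  have hsq : ∀ i, (Real.sqrt (p i) : ℂ) * (Real.sqrt (p i) : ℂ) = (p i : ℂ) := fun i => by
    rw [← Complex.ofReal_mul, Real.mul_self_sqrt (hp i)]
  have hIH : (((V 0)ᴴ)⁻¹)ᴴ = (V 0)⁻¹ := by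
    rw [← conjTranspose_nonsing_inv, conjTranspose_conjTranspose]
  have hinv2 : ∀ i, star ((((V 0)ᴴ)⁻¹) *ᵥ ψ i) ⬝ᵥ (V 0 *ᵥ ψ i) = 1 := by
    intro i
    rw [dot_mulVec_move, mulVec_mulVec, hIH, hUnit, one_mulVec, hortho]
    simp
  -- entries of GE against f_0
  have hGEa : ∀ a b, star (GE a b) = GE b a := fun a b => by
    conv_rhs => rw [← hGE]
    simp [conjTranspose_apply]
  have ite_symm : ∀ {κ : Type} [DecidableEq κ] (a b : κ),
      (if a = b then (1 : ℂ) else 0) = (if b = a then 1 else 0) := by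
    intro κ _ a b
    by_cases h : a = b
    · simp [h]
    · simp [h, Ne.symm h]
  have hGE0 : ∀ m, star (stdv M 0) ⬝ᵥ (GE *ᵥ stdv M m)
      = if (0 : Fin (M + 1)) = m then (g0 : ℂ) else 0 := by
    intro m
    have h1 : star (GE *ᵥ stdv M 0) ⬝ᵥ stdv M m = star (stdv M 0) ⬝ᵥ (GEᴴ *ᵥ stdv M m) :=
      dot_mulVec_move GE (stdv M 0) (stdv M m)
    rw [hGE.eq] at h1
    rw [← h1, hg0, star_smul, smul_dotProduct, stdv_dot]
    simp [Complex.conj_ofReal]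
  -- hermiticity of G
  have hGH : Gᴴ = G := by
    rw [hGdef]
    ext q r
    simp only [conjTranspose_apply, kroneckerMap_apply, star_mul', one_apply, apply_ite,
      star_one, star_zero]
    rw [hGEa r.2 q.2, ite_symm r.1.1 q.1.1]
    by_cases h : r.1.2 = q.1.2
    · simp [h]
    · simp [h, Ne.symm h]
  have hGGH : (G * G)ᴴ = G * G := by rw [conjTranspose_mul, hGH]
  -- expansion of G *ᵥ Ψ
  have hGΨ : G *ᵥ Ψ = ∑ i, ∑ m,
      ((Real.sqrt (p i) : ℂ) • tvec (tvec (ψ i) (V m *ᵥ ψ i)) (GE *ᵥ stdv M m)) := by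
    rw [hΨdef, PsiT, hGdef]
    simp only [mulVec_sum', mulVec_smul]
    refine Finset.sum_congr rfl fun i _ => Finset.sum_congr rfl fun m _ => ?_
    rw [kron_mulVec, one_kronecker_one, one_mulVec]
  -- e1 : ⟨Ψ, Ψ⟩ = 1
  have e1 : star Ψ ⬝ᵥ Ψ = 1 := by
    rw [hΨdef, PsiT]
    simp only [star_sum, star_smul, sum_dot, dot_sum, smul_dotProduct, dotProduct_smul,
      tvec_dot, stdv_dot, hortho, smul_eq_mul, RCLike.star_def, Complex.conj_ofReal,
      mul_ite, ite_mul, mul_one, mul_zero, zero_mul, one_mul,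
      Finset.sum_ite_eq, Finset.sum_ite_eq', Finset.sum_ite_irrel, Finset.sum_const_zero,
      Finset.mem_univ, if_true]
    have step : ∀ i : Fin n, ∑ m, ((Real.sqrt (p i) : ℂ) *
        ((Real.sqrt (p i) : ℂ) * (star (V m *ᵥ ψ i) ⬝ᵥ (V m *ᵥ ψ i)))) = (p i : ℂ) := by
      intro i
      have : ∀ m : Fin (M + 1), star (V m *ᵥ ψ i) ⬝ᵥ (V m *ᵥ ψ i)
          = star (ψ i) ⬝ᵥ (((V m)ᴴ * V m) *ᵥ ψ i) := fun m => by
        rw [dot_mulVec_move, mulVec_mulVec]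
      simp only [this, ← Finset.mul_sum, ← dot_sum, ← sum_mulVec', hKraus, one_mulVec,
        hortho, eq_self_iff_true, if_true, mul_one]
      exact hsq i
    trans (∑ i, (p i : ℂ))
    · exact Finset.sum_congr rfl fun i _ => step i
    · rw [← Complex.ofReal_sum, hp1, Complex.ofReal_one]
  -- e2 : ⟨Φ, Ψ⟩ = 1
  have e2 : star Φ ⬝ᵥ Ψ = 1 := by
    rw [hΦdef, hΨdef, PsiTilde0, PsiT]
    simp only [star_sum, star_smul, sum_dot, dot_sum, smul_dotProduct, dotProduct_smul,
      tvec_dot, stdv_dot, hortho, smul_eq_mul, RCLike.star_def, Complex.conj_ofReal,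
      mul_ite, ite_mul, mul_one, mul_zero, zero_mul, one_mul,
      Finset.sum_ite_eq, Finset.sum_ite_eq', Finset.sum_ite_irrel, Finset.sum_const_zero,
      Finset.mem_univ, if_true]
    trans (∑ i, (p i : ℂ))
    · exact Finset.sum_congr rfl fun i _ => by rw [hinv2, mul_one, hsq]
    · rw [← Complex.ofReal_sum, hp1, Complex.ofReal_one]
  -- e3 : ⟨Φ, Φ⟩ = Tr[ρ (V0† V0)⁻¹]
  have e3 : star Φ ⬝ᵥ Φ = (rho ψ p * ((V 0)ᴴ * V 0)⁻¹).trace := by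
    have hBinv : ((V 0)ᴴ * V 0)⁻¹ = (V 0)⁻¹ * ((V 0)ᴴ)⁻¹ := Matrix.mul_inv_rev _ _
    have hrhs : (rho ψ p * ((V 0)ᴴ * V 0)⁻¹).trace
        = ∑ i, (p i : ℂ) * (star (ψ i) ⬝ᵥ (((V 0)⁻¹ * ((V 0)ᴴ)⁻¹) *ᵥ ψ i)) := by
      rw [rho, hBinv, Finset.sum_mul, trace_sum]
      refine Finset.sum_congr rfl fun i _ => ?_
      rw [smul_mul_assoc, trace_smul, trace_vecMulVec_mul, smul_eq_mul]
    rw [hrhs, hΦdef, PsiTilde0]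
    simp only [star_sum, star_smul, sum_dot, dot_sum, smul_dotProduct, dotProduct_smul,
      tvec_dot, stdv_dot, hortho, smul_eq_mul, RCLike.star_def, Complex.conj_ofReal,
      mul_ite, ite_mul, mul_one, mul_zero, zero_mul, one_mul,
      Finset.sum_ite_eq, Finset.sum_ite_eq', Finset.sum_ite_irrel, Finset.sum_const_zero,
      Finset.mem_univ, if_true]
    refine Finset.sum_congr rfl fun i _ => ?_
    rw [dot_mulVec_move, mulVec_mulVec, hIH, ← mul_assoc, hsq]
  -- e4 : ⟨Φ, G Ψ⟩ = g0
  have e4 : star Φ ⬝ᵥ (G *ᵥ Ψ) = (g0 : ℂ) := by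
    rw [hGΨ, hΦdef, PsiTilde0]
    simp only [star_sum, star_smul, sum_dot, dot_sum, smul_dotProduct, dotProduct_smul,
      tvec_dot, hGE0, hortho, smul_eq_mul, RCLike.star_def, Complex.conj_ofReal,
      mul_ite, ite_mul, mul_one, mul_zero, zero_mul, one_mul,
      Finset.sum_ite_eq, Finset.sum_ite_eq', Finset.sum_ite_irrel, Finset.sum_const_zero,
      Finset.mem_univ, if_true]
    simp only [hinv2, one_mul, mul_one]
    trans (∑ i, (p i : ℂ) * (g0 : ℂ))
    · exact Finset.sum_congr rfl fun i _ => by rw [← mul_assoc, hsq]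
    · rw [← Finset.sum_mul, ← Complex.ofReal_sum, hp1, Complex.ofReal_one, one_mul]
  -- realness of diagonal matrix elements
  have real_diag : ∀ (A : Matrix ((Fin n × Fin n) × Fin (M + 1))
      ((Fin n × Fin n) × Fin (M + 1)) ℂ) (x : (Fin n × Fin n) × Fin (M + 1) → ℂ),
      Aᴴ = A → star x ⬝ᵥ (A *ᵥ x) = (((star x ⬝ᵥ (A *ᵥ x)).re : ℝ) : ℂ) := by
    intro A x hA
    have hc : (starRingEnd ℂ) (star x ⬝ᵥ (A *ᵥ x)) = star x ⬝ᵥ (A *ᵥ x) := by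
      rw [conj_dot, dot_mulVec_move, hA]
    exact (Complex.conj_eq_iff_re.mp hc).symm
  set c : ℝ := expval G Ψ with hc
  have hexp : star Ψ ⬝ᵥ (G *ᵥ Ψ) = (c : ℂ) := real_diag G Ψ hGH
  have hexp2 : star Ψ ⬝ᵥ ((G * G) *ᵥ Ψ) = ((expval (G * G) Ψ : ℝ) : ℂ) :=
    real_diag (G * G) Ψ hGGH
  have hGΨΨ : star (G *ᵥ Ψ) ⬝ᵥ Ψ = (c : ℂ) := by
    rw [dot_mulVec_move, hGH, hexp]
  have hGΨGΨ : star (G *ᵥ Ψ) ⬝ᵥ (G *ᵥ Ψ) = ((expval (G * G) Ψ : ℝ) : ℂ) := by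
    rw [dot_mulVec_move, hGH, mulVec_mulVec, hexp2]
  have hΨΦ : star Ψ ⬝ᵥ Φ = 1 := by
    have := conj_dot Φ Ψ
    rw [e2] at this
    simpa using this.symm
  -- the two vectors for Cauchy-Schwarz
  set u : (Fin n × Fin n) × Fin (M + 1) → ℂ := Φ - Ψ with hu
  set w : (Fin n × Fin n) × Fin (M + 1) → ℂ := (G *ᵥ Ψ) - (c : ℂ) • Ψ with hw
  have huw : star u ⬝ᵥ w = ((g0 - c : ℝ) : ℂ) := by
    rw [hu, hw]
    simp only [star_sub, sub_dotProduct, dotProduct_sub, dotProduct_smul, smul_eq_mul]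
    rw [e4, e2, hexp, e1]
    push_cast
    ring
  have hwu : star w ⬝ᵥ u = ((g0 - c : ℝ) : ℂ) := by
    have := conj_dot u w
    rw [huw] at this
    rw [← this]
    simp [Complex.conj_ofReal]
  have hww : star w ⬝ᵥ w = ((variance G Ψ : ℝ) : ℂ) := by
    rw [hw]
    simp only [star_sub, star_smul, sub_dotProduct, dotProduct_sub, smul_dotProduct,
      dotProduct_smul, smul_eq_mul, RCLike.star_def, Complex.conj_ofReal]
    rw [hGΨGΨ, hGΨΨ, hexp, e1, variance]
    push_cast
    ring
  have huu : (star u ⬝ᵥ u).re = survivalActivity ψ p V := by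
    rw [hu]
    simp only [star_sub, sub_dotProduct, dotProduct_sub]
    rw [e3, e2, hΨΦ, e1]
    simp only [Complex.sub_re, Complex.add_re, Complex.one_re, survivalActivity]
    ring
  -- Cauchy-Schwarz
  have hcs := inner_mul_inner_self_le (𝕜 := ℂ)
    ((WithLp.equiv 2 ((Fin n × Fin n) × Fin (M + 1) → ℂ)).symm u)
    ((WithLp.equiv 2 ((Fin n × Fin n) × Fin (M + 1) → ℂ)).symm w)
  have hip : ∀ x y : (Fin n × Fin n) × Fin (M + 1) → ℂ,
      inner ℂ ((WithLp.equiv 2 ((Fin n × Fin n) × Fin (M + 1) → ℂ)).symm x)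
        ((WithLp.equiv 2 ((Fin n × Fin n) × Fin (M + 1) → ℂ)).symm y) = star x ⬝ᵥ y :=
    fun x y => by rw [WithLp.equiv_symm_apply, EuclideanSpace.inner_toLp_toLp, dotProduct_comm]
  rw [hip, hip, hip, hip] at hcs
  rw [huw, hwu, hww] at hcs
  simp only [RCLike.re_to_complex, Complex.ofReal_re, huu] at hcs
  have hnorm : ‖((g0 - c : ℝ) : ℂ)‖ * ‖((g0 - c : ℝ) : ℂ)‖ = (c - g0) ^ 2 := by
    rw [Complex.norm_real, Real.norm_eq_abs, abs_mul_abs_self]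
    ring
  rw [hnorm] at hcs
  exact hcs
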